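/- Equivalent free vertices can be split between the players without changing the value: let G be a finite simple graph, P = (G, V_L, V_R) a Maker-Breaker Incidence position, and v_1, v_2 free vertices with N(v_1) ∩ V_F ∖ {v_2} = N(v_2) ∩ V_F ∖ {v_1} and |N(v_1) ∩ V_L| = |N(v_2) ∩ V_L| (where V_F is the set of free vertices). Then Ls(P) = Ls(G, V_L ∪ {v_1}, V_R ∪ {v_2}) and Rs(P) = Rs(G, V_L ∪ {v_1}, V_R ∪ {v_2}). -/

import Mathlib

/-- Minimax value of a scoring positional game: players alternately claim
unclaimed vertices (`turn = true` means Left/Maker to move); when all vertices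
are claimed the value is given by `score VL VR`. Left maximizes, Right minimizes. -/
noncomputable def gameValue {V : Type} [Fintype V] [DecidableEq V]
    (score : Finset V → Finset V → ℤ) :
    Bool → Finset V → Finset V → ℤ := fun turn VL VR =>
  if h : (VL ∪ VR)ᶜ = (∅ : Finset V) then score VL VR
  else
    have hne : ((VL ∪ VR)ᶜ).attach.Nonempty :=
      Finset.attach_nonempty_iff.mpr (Finset.nonempty_iff_ne_empty.mpr h)
    if turn then
      ((VL ∪ VR)ᶜ).attach.sup' hne (fun v => gameValue score false (insert v.1 VL) VR)
    else
      ((VL ∪ VR)ᶜ).attach.inf' hne (fun v => gameValue score true VL (insert v.1 VR))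
termination_by turn VL VR => ((VL ∪ VR)ᶜ).card
decreasing_by
  · rw [Finset.insert_union, Finset.compl_insert]
    exact Finset.card_erase_lt_of_mem v.2
  · rw [Finset.union_insert, Finset.compl_insert]
    exact Finset.card_erase_lt_of_mem v.2

/-- Maker-Breaker Incidence final score: number of edges of `G` both of whose
endpoints belong to Left's (Maker's) set. -/
noncomputable def mbScore {V : Type} [Fintype V] [DecidableEq V]
    (G : SimpleGraph V) (VL : Finset V) (_ : Finset V) : ℤ :=
  ({e ∈ G.edgeSet | ∀ w ∈ e, w ∈ VL} : Set (Sym2 V)).ncard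

/-- Maker-Maker Incidence final score: Left's edges minus Right's edges. -/
noncomputable def mmScore {V : Type} [Fintype V] [DecidableEq V]
    (G : SimpleGraph V) (VL VR : Finset V) : ℤ :=
  (({e ∈ G.edgeSet | ∀ w ∈ e, w ∈ VL} : Set (Sym2 V)).ncard : ℤ)
    - (({e ∈ G.edgeSet | ∀ w ∈ e, w ∈ VR} : Set (Sym2 V)).ncard : ℤ)

noncomputable def LsMB {V : Type} [Fintype V] [DecidableEq V] (G : SimpleGraph V) : ℤ :=
  gameValue (mbScore G) true ∅ ∅

noncomputable def RsMB {V : Type} [Fintype V] [DecidableEq V] (G : SimpleGraph V) : ℤ :=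
  gameValue (mbScore G) false ∅ ∅

noncomputable def LsMM {V : Type} [Fintype V] [DecidableEq V] (G : SimpleGraph V) : ℤ :=
  gameValue (mmScore G) true ∅ ∅

noncomputable def RsMM {V : Type} [Fintype V] [DecidableEq V] (G : SimpleGraph V) : ℤ :=
  gameValue (mmScore G) false ∅ ∅

/-- Maker-Breaker final score on a hypergraph with edge set `E`. -/
def mbScoreH {V : Type} [Fintype V] [DecidableEq V]
    (E : Finset (Finset V)) (VL : Finset V) (_ : Finset V) : ℤ :=
  ((E.filter (fun e => e ⊆ VL)).card : ℤ)

/-- Maker-Maker final score on a hypergraph with edge set `E`. -/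
def mmScoreH {V : Type} [Fintype V] [DecidableEq V]
    (E : Finset (Finset V)) (VL VR : Finset V) : ℤ :=
  ((E.filter (fun e => e ⊆ VL)).card : ℤ) - ((E.filter (fun e => e ⊆ VR)).card : ℤ)

section Aux

open Finset

variable {V : Type} [Fintype V] [DecidableEq V]

theorem gameValue_of_empty (score : Finset V → Finset V → ℤ) (t : Bool) (VL VR : Finset V)
    (h : (VL ∪ VR)ᶜ = (∅ : Finset V)) : gameValue score t VL VR = score VL VR := by
  rw [gameValue, dif_pos h]

theorem my_sup'_attach (s : Finset V) (hs : s.Nonempty) (f : V → ℤ) :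
    s.attach.sup' (Finset.attach_nonempty_iff.mpr hs) (fun x => f x.1) = s.sup' hs f :=
  le_antisymm (Finset.sup'_le _ _ fun x _ => Finset.le_sup' f x.2)
    (Finset.sup'_le _ _ fun a ha => Finset.le_sup' (fun x : {x // x ∈ s} => f x.1)
      (Finset.mem_attach _ ⟨a, ha⟩))

theorem my_inf'_attach (s : Finset V) (hs : s.Nonempty) (f : V → ℤ) :
    s.attach.inf' (Finset.attach_nonempty_iff.mpr hs) (fun x => f x.1) = s.inf' hs f :=
  le_antisymm
    (Finset.le_inf' _ _ fun a ha => Finset.inf'_le (fun x : {x // x ∈ s} => f x.1)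
      (Finset.mem_attach _ ⟨a, ha⟩))
    (Finset.le_inf' _ _ fun x _ => Finset.inf'_le f x.2)

theorem gameValue_true' (score : Finset V → Finset V → ℤ) (VL VR : Finset V)
    (hs : ((VL ∪ VR)ᶜ).Nonempty) :
    gameValue score true VL VR =
      ((VL ∪ VR)ᶜ).sup' hs (fun v => gameValue score false (insert v VL) VR) := by
  rw [gameValue, dif_neg (Finset.nonempty_iff_ne_empty.mp hs)]
  exact my_sup'_attach (VL ∪ VR)ᶜ hs (fun v => gameValue score false (insert v VL) VR)

theorem gameValue_false' (score : Finset V → Finset V → ℤ) (VL VR : Finset V)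
    (hs : ((VL ∪ VR)ᶜ).Nonempty) :
    gameValue score false VL VR =
      ((VL ∪ VR)ᶜ).inf' hs (fun v => gameValue score true VL (insert v VR)) := by
  rw [gameValue, dif_neg (Finset.nonempty_iff_ne_empty.mp hs)]
  exact my_inf'_attach (VL ∪ VR)ᶜ hs (fun v => gameValue score true VL (insert v VR))

theorem mbScore_eq_card (G : SimpleGraph V) [DecidableRel G.Adj] (VL VR : Finset V) :
    mbScore G VL VR = ((G.edgeFinset.filter (fun e => ∀ w ∈ e, w ∈ VL)).card : ℤ) := by
  have : ({e ∈ G.edgeSet | ∀ w ∈ e, w ∈ VL} : Set (Sym2 V))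
      = ↑(G.edgeFinset.filter (fun e => ∀ w ∈ e, w ∈ VL)) := by
    ext e
    simp [SimpleGraph.mem_edgeFinset]
  rw [mbScore, this, Set.ncard_coe_finset]

theorem score_aux (G : SimpleGraph V) [DecidableRel G.Adj] (T : Finset V) (x : V) (hx : x ∉ T) :
    (G.edgeFinset.filter (fun e => ∀ w ∈ e, w ∈ insert x T)).card
      = (G.edgeFinset.filter (fun e => ∀ w ∈ e, w ∈ T)).card
        + (G.neighborFinset x ∩ T).card := by
  have hsplit : G.edgeFinset.filter (fun e => ∀ w ∈ e, w ∈ insert x T)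
      = (G.edgeFinset.filter (fun e => ∀ w ∈ e, w ∈ T))
        ∪ (G.neighborFinset x ∩ T).image (fun w => s(x, w)) := by
    ext e
    induction e with
    | _ a b =>
      simp only [mem_filter, mem_union, mem_image, mem_inter,
        SimpleGraph.mem_neighborFinset, Sym2.mem_iff, SimpleGraph.mem_edgeFinset,
        SimpleGraph.mem_edgeSet, mem_insert, Sym2.eq_iff]
      constructor
      · rintro ⟨hab, h⟩
        have ha := h a (Or.inl rfl); have hb := h b (Or.inr rfl)
        rcases ha with ha | ha
        · subst ha
          rcases hb with hb | hb
          · exact absurd hb hab.ne'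
          · exact Or.inr ⟨b, ⟨hab, hb⟩, Or.inl ⟨rfl, rfl⟩⟩
        · rcases hb with hb | hb
          · subst hb
            exact Or.inr ⟨a, ⟨hab.symm, ha⟩, Or.inr ⟨rfl, rfl⟩⟩
          · exact Or.inl ⟨hab, fun w hw => by rcases hw with h | h <;> simp [h, ha, hb]⟩
      · rintro (⟨hab, h⟩ | ⟨w, ⟨hadj, hw⟩, (⟨h1, h2⟩ | ⟨h1, h2⟩)⟩)
        · exact ⟨hab, fun w hw => Or.inr (h w hw)⟩
        · subst h1; subst h2; exact ⟨hadj, fun u hu => by rcases hu with h | h <;> simp [h, hw]⟩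
        · subst h1; subst h2; exact ⟨hadj.symm, fun u hu => by rcases hu with h | h <;> simp [h, hw]⟩
  have hdisj : Disjoint (G.edgeFinset.filter (fun e => ∀ w ∈ e, w ∈ T))
      ((G.neighborFinset x ∩ T).image (fun w => s(x, w))) := by
    rw [disjoint_left]
    rintro e he hei
    simp only [mem_image, mem_inter] at hei
    obtain ⟨w, hw, rfl⟩ := hei
    simp only [mem_filter] at he
    exact hx (he.2 x (by simp))
  have hinj : Set.InjOn (fun w => s(x, w)) ↑(G.neighborFinset x ∩ T) := by
    intro a ha b hb hab
    simp only [Sym2.eq_iff] at hab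
    rcases hab with ⟨-, h⟩ | ⟨h1, h2⟩
    · exact h
    · simp only [coe_inter, Set.mem_inter_iff, mem_coe, SimpleGraph.mem_neighborFinset] at ha
      subst h2
      exact absurd rfl ha.1.ne'
  rw [hsplit, card_union_of_disjoint hdisj, card_image_of_injOn hinj]

theorem mbScore_swap (G : SimpleGraph V) [DecidableRel G.Adj] (T A B : Finset V) (x y : V)
    (hx : x ∉ T) (hy : y ∉ T)
    (hcd : (G.neighborFinset x ∩ T).card = (G.neighborFinset y ∩ T).card) :
    mbScore G (insert x T) A = mbScore G (insert y T) B := by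
  rw [mbScore_eq_card, mbScore_eq_card, score_aux G T x hx, score_aux G T y hy, hcd]

theorem gv_union (G : SimpleGraph V) [DecidableRel G.Adj] (t : Bool) (WL WR WR' : Finset V)
    (hU : WL ∪ WR = WL ∪ WR') :
    gameValue (mbScore G) t WL WR = gameValue (mbScore G) t WL WR' := by
  by_cases h : (WL ∪ WR)ᶜ = (∅ : Finset V)
  · have h' : (WL ∪ WR')ᶜ = (∅ : Finset V) := by rw [← hU]; exact h
    rw [gameValue_of_empty _ _ _ _ h, gameValue_of_empty _ _ _ _ h']
    rfl
  · have h' : (WL ∪ WR')ᶜ ≠ (∅ : Finset V) := by rw [← hU]; exact h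
    have hs : ((WL ∪ WR)ᶜ).Nonempty := Finset.nonempty_iff_ne_empty.mpr h
    have hs' : ((WL ∪ WR')ᶜ).Nonempty := Finset.nonempty_iff_ne_empty.mpr h'
    have hc : (WL ∪ WR)ᶜ = (WL ∪ WR')ᶜ := by rw [hU]
    cases t with
    | false =>
      rw [gameValue_false' (mbScore G) _ _ hs, gameValue_false' (mbScore G) _ _ hs']
      exact Finset.inf'_congr hs hc (fun v hv =>
        gv_union G true WL (insert v WR) (insert v WR')
          (by rw [Finset.union_insert, Finset.union_insert, hU]))
    | true =>
      rw [gameValue_true' (mbScore G) _ _ hs, gameValue_true' (mbScore G) _ _ hs']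
      exact Finset.sup'_congr hs hc (fun v hv =>
        gv_union G false (insert v WL) WR WR'
          (by rw [Finset.insert_union, Finset.insert_union, hU]))
termination_by ((WL ∪ WR)ᶜ).card
decreasing_by
  · rw [Finset.union_insert, Finset.compl_insert]
    exact Finset.card_erase_lt_of_mem hv
  · rw [Finset.insert_union, Finset.compl_insert]
    exact Finset.card_erase_lt_of_mem hv

theorem gv_swap (G : SimpleGraph V) [DecidableRel G.Adj] (x y : V) (t : Bool)
    (T WR : Finset V) (hxy : x ≠ y) (hxT : x ∉ T) (hyT : y ∉ T)
    (hU : insert x T ∪ WR = insert y T ∪ WR)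
    (hnbrU : G.neighborFinset x ∩ (insert x T ∪ WR)ᶜ
      = G.neighborFinset y ∩ (insert x T ∪ WR)ᶜ)
    (hcd : (G.neighborFinset x ∩ T).card = (G.neighborFinset y ∩ T).card) :
    gameValue (mbScore G) t (insert x T) WR = gameValue (mbScore G) t (insert y T) WR := by
  by_cases h : (insert x T ∪ WR)ᶜ = (∅ : Finset V)
  · have h' : (insert y T ∪ WR)ᶜ = (∅ : Finset V) := by rw [← hU]; exact h
    rw [gameValue_of_empty _ _ _ _ h, gameValue_of_empty _ _ _ _ h']
    exact mbScore_swap G T WR WR x y hxT hyT hcd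
  · have h' : (insert y T ∪ WR)ᶜ ≠ (∅ : Finset V) := by rw [← hU]; exact h
    have hs : ((insert x T ∪ WR)ᶜ).Nonempty := Finset.nonempty_iff_ne_empty.mpr h
    have hs' : ((insert y T ∪ WR)ᶜ).Nonempty := Finset.nonempty_iff_ne_empty.mpr h'
    have hc : (insert x T ∪ WR)ᶜ = (insert y T ∪ WR)ᶜ := by rw [hU]
    -- basic facts about any free vertex v
    have hfacts : ∀ v ∈ (insert x T ∪ WR)ᶜ, v ≠ x ∧ v ≠ y ∧ v ∉ T ∧
        (v ∈ G.neighborFinset x ↔ v ∈ G.neighborFinset y) := by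
      intro v hv
      have hv' := hv
      rw [Finset.mem_compl] at hv'
      have hvx : v ≠ x := fun hvx => hv' (by subst hvx; exact Finset.mem_union_left _ (Finset.mem_insert_self _ _))
      have hvT : v ∉ T := fun hvT => hv' (Finset.mem_union_left _ (Finset.mem_insert_of_mem hvT))
      have hvy : v ≠ y := by
        intro hvy
        have : v ∈ (insert y T ∪ WR)ᶜ := hc ▸ hv
        rw [Finset.mem_compl] at this
        exact this (by subst hvy; exact Finset.mem_union_left _ (Finset.mem_insert_self _ _))
      refine ⟨hvx, hvy, hvT, ?_⟩
      constructor
      · intro hvN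
        have : v ∈ G.neighborFinset x ∩ (insert x T ∪ WR)ᶜ := Finset.mem_inter.mpr ⟨hvN, hv⟩
        rw [hnbrU] at this
        exact (Finset.mem_inter.mp this).1
      · intro hvN
        have : v ∈ G.neighborFinset y ∩ (insert x T ∪ WR)ᶜ := Finset.mem_inter.mpr ⟨hvN, hv⟩
        rw [← hnbrU] at this
        exact (Finset.mem_inter.mp this).1
    -- new card condition after a free vertex v is added to T or WR
    have hcd' : ∀ v ∈ (insert x T ∪ WR)ᶜ,
        (G.neighborFinset x ∩ insert v T).card = (G.neighborFinset y ∩ insert v T).card := by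
      intro v hv
      obtain ⟨hvx, hvy, hvT, hiff⟩ := hfacts v hv
      have hins : ∀ (N : Finset V), v ∈ N → N ∩ insert v T = insert v (N ∩ T) := by
        intro N hvN; ext a
        simp only [Finset.mem_inter, Finset.mem_insert]
        constructor
        · rintro ⟨h1, h2 | h2⟩; exacts [Or.inl h2, Or.inr ⟨h1, h2⟩]
        · rintro (rfl | ⟨h1, h2⟩); exacts [⟨hvN, Or.inl rfl⟩, ⟨h1, Or.inr h2⟩]
      have hnins : ∀ (N : Finset V), v ∉ N → N ∩ insert v T = N ∩ T := by
        intro N hvN; ext a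
        simp only [Finset.mem_inter, Finset.mem_insert]
        constructor
        · rintro ⟨h1, h2 | h2⟩
          · subst h2; exact absurd h1 hvN
          · exact ⟨h1, h2⟩
        · rintro ⟨h1, h2⟩; exact ⟨h1, Or.inr h2⟩
      by_cases hvN : v ∈ G.neighborFinset x
      · rw [hins _ hvN, hins _ (hiff.mp hvN),
          Finset.card_insert_of_notMem (fun hm => hvT (Finset.mem_inter.mp hm).2),
          Finset.card_insert_of_notMem (fun hm => hvT (Finset.mem_inter.mp hm).2), hcd]
      · rw [hnins _ hvN, hnins _ (fun hm => hvN (hiff.mpr hm))]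
        exact hcd
    cases t with
    | true =>
      rw [gameValue_true' (mbScore G) _ _ hs, gameValue_true' (mbScore G) _ _ hs']
      refine Finset.sup'_congr hs hc (fun v hv => ?_)
      obtain ⟨hvx, hvy, hvT, hiff⟩ := hfacts v hv
      have e1 : insert v (insert x T) = insert x (insert v T) := Finset.insert_comm _ _ _
      have e2 : insert v (insert y T) = insert y (insert v T) := Finset.insert_comm _ _ _
      rw [e1, e2]
      have hcompl : (insert x (insert v T) ∪ WR)ᶜ = ((insert x T ∪ WR)ᶜ).erase v := by
        rw [← e1, Finset.insert_union, Finset.compl_insert]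
      refine gv_swap G x y false (insert v T) WR hxy ?_ ?_ ?_ ?_ (hcd' v hv)
      · simp only [Finset.mem_insert]
        rintro (h1 | h1); exacts [hvx h1.symm, hxT h1]
      · simp only [Finset.mem_insert]
        rintro (h1 | h1); exacts [hvy h1.symm, hyT h1]
      · rw [← e1, ← e2, Finset.insert_union v (insert x T) WR, Finset.insert_union v (insert y T) WR, hU]
      · rw [hcompl, Finset.inter_comm, Finset.erase_inter, Finset.inter_comm, hnbrU,
          Finset.inter_comm, ← Finset.erase_inter, Finset.inter_comm]
    | false =>
      rw [gameValue_false' (mbScore G) _ _ hs, gameValue_false' (mbScore G) _ _ hs']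
      refine Finset.inf'_congr hs hc (fun v hv => ?_)
      have hcompl : (insert x T ∪ insert v WR)ᶜ = ((insert x T ∪ WR)ᶜ).erase v := by
        rw [Finset.union_insert, Finset.compl_insert]
      refine gv_swap G x y true T (insert v WR) hxy hxT hyT ?_ ?_ hcd
      · rw [Finset.union_insert, Finset.union_insert, hU]
      · rw [hcompl, Finset.inter_comm, Finset.erase_inter, Finset.inter_comm, hnbrU,
          Finset.inter_comm, ← Finset.erase_inter, Finset.inter_comm]
termination_by ((insert x T ∪ WR)ᶜ).card
decreasing_by
  all_goals (rw [hcompl]; exact Finset.card_erase_lt_of_mem hv)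

theorem main_aux (G : SimpleGraph V) [DecidableRel G.Adj] (t : Bool) (VL VR : Finset V)
    (v1 v2 : V) (hne : v1 ≠ v2)
    (hv1 : v1 ∈ (VL ∪ VR)ᶜ) (hv2 : v2 ∈ (VL ∪ VR)ᶜ)
    (hnbr : (G.neighborFinset v1 ∩ (VL ∪ VR)ᶜ).erase v2 =
        (G.neighborFinset v2 ∩ (VL ∪ VR)ᶜ).erase v1)
    (hcard : (G.neighborFinset v1 ∩ VL).card = (G.neighborFinset v2 ∩ VL).card) :
    gameValue (mbScore G) t VL VR
      = gameValue (mbScore G) t (insert v1 VL) (insert v2 VR) := by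
  have hv1' := Finset.mem_compl.mp hv1
  have hv2' := Finset.mem_compl.mp hv2
  have hv1VL : v1 ∉ VL := fun h => hv1' (Finset.mem_union_left _ h)
  have hv2VL : v2 ∉ VL := fun h => hv2' (Finset.mem_union_left _ h)
  have hcompl1 : ∀ v : V, (insert v VL ∪ VR)ᶜ = ((VL ∪ VR)ᶜ).erase v := by
    intro v; rw [Finset.insert_union, Finset.compl_insert]
  have hcompl2 : ∀ v : V, (VL ∪ insert v VR)ᶜ = ((VL ∪ VR)ᶜ).erase v := by
    intro v; rw [Finset.union_insert, Finset.compl_insert]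
  have hU'c : (insert v1 VL ∪ insert v2 VR)ᶜ = (((VL ∪ VR)ᶜ).erase v2).erase v1 := by
    rw [Finset.insert_union, Finset.union_insert, Finset.compl_insert, Finset.compl_insert]
  have hkey : ∀ w ∈ (VL ∪ VR)ᶜ, w ≠ v1 → w ≠ v2 →
      (w ∈ G.neighborFinset v1 ↔ w ∈ G.neighborFinset v2) := by
    intro w hw h1 h2
    constructor
    · intro hN
      have hm : w ∈ (G.neighborFinset v1 ∩ (VL ∪ VR)ᶜ).erase v2 :=
        Finset.mem_erase.mpr ⟨h2, Finset.mem_inter.mpr ⟨hN, hw⟩⟩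
      rw [hnbr] at hm
      exact (Finset.mem_inter.mp (Finset.mem_of_mem_erase hm)).1
    · intro hN
      have hm : w ∈ (G.neighborFinset v2 ∩ (VL ∪ VR)ᶜ).erase v1 :=
        Finset.mem_erase.mpr ⟨h1, Finset.mem_inter.mpr ⟨hN, hw⟩⟩
      rw [← hnbr] at hm
      exact (Finset.mem_inter.mp (Finset.mem_of_mem_erase hm)).1
  have hnbrS : ∀ S : Finset V, S ⊆ (VL ∪ VR)ᶜ →
      (G.neighborFinset v1 ∩ S).erase v2 = (G.neighborFinset v2 ∩ S).erase v1 := by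
    intro S hS
    ext a
    simp only [Finset.mem_erase, Finset.mem_inter]
    constructor
    · rintro ⟨ha2, haN, haS⟩
      have ha1 : a ≠ v1 := by
        rintro rfl
        exact G.loopless.irrefl _ ((SimpleGraph.mem_neighborFinset _ _ _).mp haN)
      exact ⟨ha1, (hkey a (hS haS) ha1 ha2).mp haN, haS⟩
    · rintro ⟨ha1, haN, haS⟩
      have ha2 : a ≠ v2 := by
        rintro rfl
        exact G.loopless.irrefl _ ((SimpleGraph.mem_neighborFinset _ _ _).mp haN)
      exact ⟨ha2, (hkey a (hS haS) ha1 ha2).mpr haN, haS⟩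
  have hinsgen : ∀ (N S : Finset V) (v : V), v ∈ N → N ∩ insert v S = insert v (N ∩ S) := by
    intro N S v hvN; ext a
    simp only [Finset.mem_inter, Finset.mem_insert]
    constructor
    · rintro ⟨h1, h2 | h2⟩; exacts [Or.inl h2, Or.inr ⟨h1, h2⟩]
    · rintro (rfl | ⟨h1, h2⟩); exacts [⟨hvN, Or.inl rfl⟩, ⟨h1, Or.inr h2⟩]
  have hninsgen : ∀ (N S : Finset V) (v : V), v ∉ N → N ∩ insert v S = N ∩ S := by
    intro N S v hvN; ext a
    simp only [Finset.mem_inter, Finset.mem_insert]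
    constructor
    · rintro ⟨h1, h2 | h2⟩
      · subst h2; exact absurd h1 hvN
      · exact ⟨h1, h2⟩
    · rintro ⟨h1, h2⟩; exact ⟨h1, Or.inr h2⟩
  have hcardv : ∀ v ∈ (VL ∪ VR)ᶜ, v ≠ v1 → v ≠ v2 →
      (G.neighborFinset v1 ∩ insert v VL).card = (G.neighborFinset v2 ∩ insert v VL).card := by
    intro v hv h1 h2
    have hvVL : v ∉ VL := fun h => (Finset.mem_compl.mp hv) (Finset.mem_union_left _ h)
    by_cases hvN : v ∈ G.neighborFinset v1
    · rw [hinsgen _ _ _ hvN, hinsgen _ _ _ ((hkey v hv h1 h2).mp hvN),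
        Finset.card_insert_of_notMem (fun hm => hvVL (Finset.mem_inter.mp hm).2),
        Finset.card_insert_of_notMem (fun hm => hvVL (Finset.mem_inter.mp hm).2), hcard]
    · rw [hninsgen _ _ _ hvN, hninsgen _ _ _ (fun hm => hvN ((hkey v hv h1 h2).mpr hm))]
      exact hcard
  -- IH for Left moves
  have hIHL : ∀ (t' : Bool) (v : V), v ∈ (VL ∪ VR)ᶜ → v ≠ v1 → v ≠ v2 →
      gameValue (mbScore G) t' (insert v VL) VR
        = gameValue (mbScore G) t' (insert v (insert v1 VL)) (insert v2 VR) := by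
    intro t' v hv h1 h2
    have h1m : v1 ∈ (insert v VL ∪ VR)ᶜ := by
      rw [hcompl1]; exact Finset.mem_erase.mpr ⟨fun h => h1 h.symm, hv1⟩
    have h2m : v2 ∈ (insert v VL ∪ VR)ᶜ := by
      rw [hcompl1]; exact Finset.mem_erase.mpr ⟨fun h => h2 h.symm, hv2⟩
    have hnbr' : (G.neighborFinset v1 ∩ (insert v VL ∪ VR)ᶜ).erase v2 =
        (G.neighborFinset v2 ∩ (insert v VL ∪ VR)ᶜ).erase v1 := by
      rw [hcompl1]
      exact hnbrS _ (Finset.erase_subset _ _)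
    have := main_aux G t' (insert v VL) VR v1 v2 hne h1m h2m hnbr' (hcardv v hv h1 h2)
    rw [this, Finset.insert_comm]
  -- IH for Right moves
  have hIHR : ∀ (t' : Bool) (v : V), v ∈ (VL ∪ VR)ᶜ → v ≠ v1 → v ≠ v2 →
      gameValue (mbScore G) t' VL (insert v VR)
        = gameValue (mbScore G) t' (insert v1 VL) (insert v (insert v2 VR)) := by
    intro t' v hv h1 h2
    have h1m : v1 ∈ (VL ∪ insert v VR)ᶜ := by
      rw [hcompl2]; exact Finset.mem_erase.mpr ⟨fun h => h1 h.symm, hv1⟩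
    have h2m : v2 ∈ (VL ∪ insert v VR)ᶜ := by
      rw [hcompl2]; exact Finset.mem_erase.mpr ⟨fun h => h2 h.symm, hv2⟩
    have hnbr' : (G.neighborFinset v1 ∩ (VL ∪ insert v VR)ᶜ).erase v2 =
        (G.neighborFinset v2 ∩ (VL ∪ insert v VR)ᶜ).erase v1 := by
      rw [hcompl2]
      exact hnbrS _ (Finset.erase_subset _ _)
    have := main_aux G t' VL (insert v VR) v1 v2 hne h1m h2m hnbr' hcard
    rw [this, Finset.insert_comm]
  -- the swap chain
  have hswap : ∀ t' : Bool,
      gameValue (mbScore G) t' (insert v2 VL) (insert v1 VR)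
        = gameValue (mbScore G) t' (insert v1 VL) (insert v2 VR) := by
    intro t'
    have e1 : insert v2 VL ∪ insert v1 VR = insert v2 VL ∪ insert v2 (insert v1 VR) := by
      ext a; simp only [Finset.mem_union, Finset.mem_insert]; tauto
    have e2 : insert v1 VL ∪ insert v2 VR = insert v1 VL ∪ insert v2 (insert v1 VR) := by
      ext a; simp only [Finset.mem_union, Finset.mem_insert]; tauto
    have hUxy : insert v2 VL ∪ insert v2 (insert v1 VR)
        = insert v1 VL ∪ insert v2 (insert v1 VR) := by
      ext a; simp only [Finset.mem_union, Finset.mem_insert]; tauto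
    have hcompl3 : (insert v2 VL ∪ insert v2 (insert v1 VR))ᶜ
        = (((VL ∪ VR)ᶜ).erase v1).erase v2 := by
      have : insert v2 VL ∪ insert v2 (insert v1 VR) = insert v2 (insert v1 (VL ∪ VR)) := by
        ext a; simp only [Finset.mem_union, Finset.mem_insert]; tauto
      rw [this, Finset.compl_insert, Finset.compl_insert]
    have hS1 : v1 ∉ (((VL ∪ VR)ᶜ).erase v1).erase v2 := by
      intro hm
      exact (Finset.mem_erase.mp (Finset.mem_of_mem_erase hm)).1 rfl
    have hS2 : v2 ∉ (((VL ∪ VR)ᶜ).erase v1).erase v2 := by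
      intro hm
      exact (Finset.mem_erase.mp hm).1 rfl
    have hSsub : (((VL ∪ VR)ᶜ).erase v1).erase v2 ⊆ (VL ∪ VR)ᶜ :=
      (Finset.erase_subset _ _).trans (Finset.erase_subset _ _)
    have hNS := hnbrS _ hSsub
    rw [Finset.erase_eq_of_notMem (fun hm => hS2 (Finset.mem_inter.mp hm).2),
      Finset.erase_eq_of_notMem (fun hm => hS1 (Finset.mem_inter.mp hm).2)] at hNS
    calc gameValue (mbScore G) t' (insert v2 VL) (insert v1 VR)
        = gameValue (mbScore G) t' (insert v2 VL) (insert v2 (insert v1 VR)) :=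
          gv_union G t' _ _ _ e1
      _ = gameValue (mbScore G) t' (insert v1 VL) (insert v2 (insert v1 VR)) := by
          refine gv_swap G v2 v1 t' VL _ hne.symm hv2VL hv1VL hUxy ?_ hcard.symm
          rw [hcompl3]
          exact hNS.symm
      _ = gameValue (mbScore G) t' (insert v1 VL) (insert v2 VR) :=
          (gv_union G t' _ _ _ e2).symm
  -- membership facts
  have hv2m1 : v2 ∈ (insert v1 VL ∪ VR)ᶜ := by
    rw [hcompl1]; exact Finset.mem_erase.mpr ⟨hne.symm, hv2⟩
  have hv1m2 : v1 ∈ (insert v2 VL ∪ VR)ᶜ := by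
    rw [hcompl1]; exact Finset.mem_erase.mpr ⟨hne, hv1⟩
  have hv1m3 : v1 ∈ (VL ∪ insert v2 VR)ᶜ := by
    rw [hcompl2]; exact Finset.mem_erase.mpr ⟨hne, hv1⟩
  have hv2m4 : v2 ∈ (VL ∪ insert v1 VR)ᶜ := by
    rw [hcompl2]; exact Finset.mem_erase.mpr ⟨hne.symm, hv2⟩
  have hsL : ((VL ∪ VR)ᶜ).Nonempty := ⟨v1, hv1⟩
  cases t with
  | true =>
    rw [gameValue_true' (mbScore G) _ _ hsL]
    apply le_antisymm
    · apply Finset.sup'_le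
      intro v hv
      by_cases hveq1 : v = v1
      · subst hveq1
        rw [gameValue_false' (mbScore G) _ _ ⟨v2, hv2m1⟩]
        exact Finset.inf'_le _ hv2m1
      · by_cases hveq2 : v = v2
        · subst hveq2
          rw [gameValue_false' (mbScore G) _ _ ⟨v1, hv1m2⟩]
          refine le_trans (Finset.inf'_le _ hv1m2) ?_
          exact le_of_eq (hswap true)
        · rw [hIHL false v hv hveq1 hveq2]
          have hvmem : v ∈ (insert v1 VL ∪ insert v2 VR)ᶜ := by
            rw [hU'c]
            exact Finset.mem_erase.mpr ⟨hveq1, Finset.mem_erase.mpr ⟨hveq2, hv⟩⟩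
          rw [gameValue_true' (mbScore G) _ _ ⟨v, hvmem⟩]
          exact Finset.le_sup'
            (fun w => gameValue (mbScore G) false (insert w (insert v1 VL)) (insert v2 VR)) hvmem
    · by_cases hF2 : (insert v1 VL ∪ insert v2 VR)ᶜ = (∅ : Finset V)
      · rw [gameValue_of_empty _ _ _ _ hF2]
        refine le_trans ?_ (Finset.le_sup' _ hv1)
        rw [gameValue_false' (mbScore G) _ _ ⟨v2, hv2m1⟩]
        apply Finset.le_inf'
        intro w hw
        have hwF : w ∈ ((VL ∪ VR)ᶜ).erase v1 := by rw [← hcompl1]; exact hw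
        have hw2 : w = v2 := by
          by_contra hwne
          have : w ∈ (insert v1 VL ∪ insert v2 VR)ᶜ := by
            rw [hU'c]
            exact Finset.mem_erase.mpr ⟨(Finset.mem_erase.mp hwF).1,
              Finset.mem_erase.mpr ⟨hwne, (Finset.mem_erase.mp hwF).2⟩⟩
          rw [hF2] at this
          exact absurd this (Finset.notMem_empty w)
        subst hw2
        rw [gameValue_of_empty _ _ _ _ hF2]
      · rw [gameValue_true' (mbScore G) _ _ (Finset.nonempty_iff_ne_empty.mpr hF2)]
        apply Finset.sup'_le
        intro u hu
        have huf : u ∈ (VL ∪ VR)ᶜ ∧ u ≠ v1 ∧ u ≠ v2 := by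
          rw [hU'c] at hu
          have h1 := Finset.mem_erase.mp hu
          have h2 := Finset.mem_erase.mp h1.2
          exact ⟨h2.2, h1.1, h2.1⟩
        rw [← hIHL false u huf.1 huf.2.1 huf.2.2]
        exact Finset.le_sup' (fun w => gameValue (mbScore G) false (insert w VL) VR) huf.1
  | false =>
    rw [gameValue_false' (mbScore G) _ _ hsL]
    apply le_antisymm
    · by_cases hF2 : (insert v1 VL ∪ insert v2 VR)ᶜ = (∅ : Finset V)
      · rw [gameValue_of_empty _ _ _ _ hF2]
        refine le_trans (Finset.inf'_le _ hv2) ?_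
        rw [gameValue_true' (mbScore G) _ _ ⟨v1, hv1m3⟩]
        apply Finset.sup'_le
        intro w hw
        have hwF : w ∈ ((VL ∪ VR)ᶜ).erase v2 := by rw [← hcompl2]; exact hw
        have hw1 : w = v1 := by
          by_contra hwne
          have : w ∈ (insert v1 VL ∪ insert v2 VR)ᶜ := by
            rw [hU'c]
            exact Finset.mem_erase.mpr ⟨hwne, Finset.mem_erase.mpr
              ⟨(Finset.mem_erase.mp hwF).1, (Finset.mem_erase.mp hwF).2⟩⟩
          rw [hF2] at this
          exact absurd this (Finset.notMem_empty w)
        subst hw1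
        rw [gameValue_of_empty _ _ _ _ hF2]
      · rw [gameValue_false' (mbScore G) _ _ (Finset.nonempty_iff_ne_empty.mpr hF2)]
        apply Finset.le_inf'
        intro u hu
        have huf : u ∈ (VL ∪ VR)ᶜ ∧ u ≠ v1 ∧ u ≠ v2 := by
          rw [hU'c] at hu
          have h1 := Finset.mem_erase.mp hu
          have h2 := Finset.mem_erase.mp h1.2
          exact ⟨h2.2, h1.1, h2.1⟩
        rw [← hIHR true u huf.1 huf.2.1 huf.2.2]
        exact Finset.inf'_le _ huf.1
    · apply Finset.le_inf'
      intro v hv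
      by_cases hveq2 : v = v2
      · subst hveq2
        rw [gameValue_true' (mbScore G) _ _ ⟨v1, hv1m3⟩]
        exact Finset.le_sup'
          (fun w => gameValue (mbScore G) false (insert w VL) (insert v VR)) hv1m3
      · by_cases hveq1 : v = v1
        · subst hveq1
          rw [gameValue_true' (mbScore G) _ _ ⟨v2, hv2m4⟩]
          refine le_trans ?_ (Finset.le_sup' _ hv2m4)
          exact le_of_eq (hswap false).symm
        · rw [hIHR true v hv hveq1 hveq2]
          have hvmem : v ∈ (insert v1 VL ∪ insert v2 VR)ᶜ := by
            rw [hU'c]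
            exact Finset.mem_erase.mpr ⟨hveq1, Finset.mem_erase.mpr ⟨hveq2, hv⟩⟩
          rw [gameValue_false' (mbScore G) _ _ ⟨v, hvmem⟩]
          exact Finset.inf'_le _ hvmem
termination_by ((VL ∪ VR)ᶜ).card
decreasing_by
  all_goals first
    | (rw [Finset.insert_union, Finset.compl_insert]; exact Finset.card_erase_lt_of_mem hv)
    | (rw [Finset.union_insert, Finset.compl_insert]; exact Finset.card_erase_lt_of_mem hv)

end Aux

/-- Equivalent free vertices can be split between the two players
without changing the Maker-Breaker Incidence value of the position. -/
theorem makerBreaker_incidence_equivalent_vertices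
    {V : Type} [Fintype V] [DecidableEq V] (G : SimpleGraph V) [DecidableRel G.Adj]
    (VL VR : Finset V) (hdisj : Disjoint VL VR) (v1 v2 : V) (hne : v1 ≠ v2)
    (hv1 : v1 ∈ (VL ∪ VR)ᶜ) (hv2 : v2 ∈ (VL ∪ VR)ᶜ)
    (hnbr : (G.neighborFinset v1 ∩ (VL ∪ VR)ᶜ).erase v2 =
        (G.neighborFinset v2 ∩ (VL ∪ VR)ᶜ).erase v1)
    (hcard : (G.neighborFinset v1 ∩ VL).card = (G.neighborFinset v2 ∩ VL).card) :
    gameValue (mbScore G) true VL VR =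
        gameValue (mbScore G) true (insert v1 VL) (insert v2 VR) ∧
      gameValue (mbScore G) false VL VR =
        gameValue (mbScore G) false (insert v1 VL) (insert v2 VR) :=
  ⟨main_aux G true VL VR v1 v2 hne hv1 hv2 hnbr hcard,
   main_aux G false VL VR v1 v2 hne hv1 hv2 hnbr hcard⟩
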